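/- Define f(n) = (2n+1) + Σ_{i=1}^{n} (−1)^i (2n+1−2i) [C(2n,i)/2^i + C(2n,i−1)/(3·2^{i−1})]. Then f satisfies the recursion f(2m+2) = p_m·f(2m) − q_m with p_m = (7+6m)/(16(1+6m)) and q_m = (2+m)(5+2m)(13+177m+704m²+420m³)·C(7+4m, 2+2m)·2^{−1−2m} / (48(1+4m)(3+4m)(5+4m)(7+4m)(1+6m)), and consequently f(2m) < 0 for all integers m ≥ 2. -/

import Mathlib

set_option maxHeartbeats 2000000

open Finset

/-- `f(n) = (2n+1) + Σ_{i=1}^{n} (−1)^i (2n+1−2i) [C(2n,i)/2^i + C(2n,i−1)/(3·2^{i−1})]`. -/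
noncomputable def fSeq3 (n : ℕ) : ℝ :=
  (2 * n + 1 : ℝ) +
    ∑ i ∈ Icc 1 n, (-1 : ℝ) ^ i * ((2 * n + 1 : ℝ) - 2 * i) *
      ((Nat.choose (2 * n) i : ℝ) / 2 ^ i +
        (Nat.choose (2 * n) (i - 1) : ℝ) / (3 * 2 ^ (i - 1)))

noncomputable def Sp (N k : ℕ) : ℝ :=
  ∑ j ∈ range k, (-1 : ℝ) ^ j * (Nat.choose N j : ℝ) / 2 ^ j

lemma Sp_succ (N k : ℕ) :
    Sp N (k + 1) = Sp N k + (-1 : ℝ) ^ k * (Nat.choose N k : ℝ) / 2 ^ k := by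
  simp [Sp, Finset.sum_range_succ]

lemma Sp_step (N k : ℕ) :
    Sp (N + 2) (k + 2)
      = (-1 : ℝ) ^ (k + 1) * (Nat.choose N (k + 1) : ℝ) / 2 ^ (k + 1) + (1 / 4) * Sp N k := by
  induction k with
  | zero =>
      simp [Sp, Finset.sum_range_succ]
      ring
  | succ k ih =>
      rw [Sp_succ, ih, Sp_succ]
      have hp : (Nat.choose (N + 2) (k + 2) : ℝ)
          = (Nat.choose N (k + 2) : ℝ) + 2 * Nat.choose N (k + 1) + Nat.choose N k := by
        have : Nat.choose (N + 2) (k + 2)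
            = Nat.choose N (k + 2) + Nat.choose N (k + 1) + (Nat.choose N (k + 1) + Nat.choose N k) := by
          rw [Nat.choose_succ_succ (N + 1) (k + 1), Nat.choose_succ_succ N (k + 1),
            Nat.choose_succ_succ N k]
          ring
        rw [this]; push_cast; ring
      rw [hp]
      ring

lemma closed_partial (M : ℕ) : ∀ k, k + 1 ≤ M + 1 →
    (2 * ((M : ℝ) + 1) + 1) + ∑ i ∈ Icc 1 (k + 1), (-1 : ℝ) ^ i * ((2 * ((M : ℝ) + 1) + 1) - 2 * i) *
        ((Nat.choose (2 * (M + 1)) i : ℝ) / 2 ^ i +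
          (Nat.choose (2 * (M + 1)) (i - 1) : ℝ) / (3 * 2 ^ (i - 1)))
    = (2 / 3) * (3 * (M : ℝ) + 4) * Sp (2 * M + 1) (k + 1)
      + (2 * (M : ℝ) + 3) * ((-1 : ℝ) ^ (k + 1) * (Nat.choose (2 * M + 1) (k + 1) : ℝ) / 2 ^ (k + 1))
      + (2 * (M : ℝ) + 3) * ((-1 : ℝ) ^ k * (Nat.choose (2 * M + 1) k : ℝ) / 2 ^ k) / 6 := by
  intro k
  induction k with
  | zero =>
      intro _
      simp only [zero_add]
      rw [Finset.Icc_self, Finset.sum_singleton, Sp_succ]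
      simp [Sp, Nat.choose_one_right]
      push_cast
      ring
  | succ k ih =>
      intro h
      have hk : k + 1 ≤ M + 1 := by omega
      rw [Finset.sum_Icc_succ_top (by omega : 1 ≤ k + 1 + 1), ← add_assoc, ih hk, Sp_succ (2 * M + 1) (k + 1)]
      have hkM : k ≤ M := by omega
      have hy : (Nat.choose (2 * M + 1) (k + 1) : ℝ) * (k + 1)
          = (Nat.choose (2 * M + 1) k : ℝ) * ((2 * M + 1 : ℝ) - k) := by
        have := Nat.choose_succ_right_eq (2 * M + 1) k
        have hc : ((2 * M + 1 - k : ℕ) : ℝ) = (2 * M + 1 : ℝ) - k := by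
          rw [Nat.cast_sub (by omega)]; push_cast; ring
        calc (Nat.choose (2 * M + 1) (k + 1) : ℝ) * (k + 1)
            = ((Nat.choose (2 * M + 1) (k + 1) * (k + 1) : ℕ) : ℝ) := by push_cast; ring
          _ = ((Nat.choose (2 * M + 1) k * (2 * M + 1 - k) : ℕ) : ℝ) := by rw [this]
          _ = _ := by push_cast [Nat.cast_sub (show k ≤ 2 * M + 1 by omega)]; ring
      have hz : (Nat.choose (2 * M + 1) (k + 1 + 1) : ℝ) * (k + 1 + 1)
          = (Nat.choose (2 * M + 1) (k + 1) : ℝ) * ((2 * M : ℝ) - k) := by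
        have := Nat.choose_succ_right_eq (2 * M + 1) (k + 1)
        calc (Nat.choose (2 * M + 1) (k + 1 + 1) : ℝ) * (k + 1 + 1)
            = ((Nat.choose (2 * M + 1) (k + 1 + 1) * (k + 1 + 1) : ℕ) : ℝ) := by push_cast; ring
          _ = ((Nat.choose (2 * M + 1) (k + 1) * (2 * M + 1 - (k + 1)) : ℕ) : ℝ) := by rw [this]
          _ = _ := by
                rw [show 2 * M + 1 - (k + 1) = 2 * M - k by omega]
                push_cast [Nat.cast_sub (show k ≤ 2 * M by omega)]; ring
      have hp2 : (Nat.choose (2 * (M + 1)) (k + 1 + 1) : ℝ)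
          = (Nat.choose (2 * M + 1) (k + 1) : ℝ) + (Nat.choose (2 * M + 1) (k + 1 + 1) : ℝ) := by
        have : 2 * (M + 1) = (2 * M + 1) + 1 := by ring
        rw [this, Nat.choose_succ_succ (2 * M + 1) (k + 1)]
        push_cast; ring
      have hp1 : (Nat.choose (2 * (M + 1)) (k + 1) : ℝ)
          = (Nat.choose (2 * M + 1) k : ℝ) + (Nat.choose (2 * M + 1) (k + 1) : ℝ) := by
        have : 2 * (M + 1) = (2 * M + 1) + 1 := by ring
        rw [this, Nat.choose_succ_succ (2 * M + 1) k]
        push_cast; ring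
      have hsub : (k + 1 + 1) - 1 = k + 1 := rfl
      rw [hsub, hp2, hp1]
      have hd1 : ((2 * M + 1 : ℝ) - k) ≠ 0 := by
        have : (k : ℝ) ≤ M := by exact_mod_cast hkM
        nlinarith [this]
      have hx : (Nat.choose (2 * M + 1) k : ℝ)
          = (Nat.choose (2 * M + 1) (k + 1) : ℝ) * (k + 1) / ((2 * M + 1 : ℝ) - k) := by
        field_simp
        linarith [hy]
      have hzz : (Nat.choose (2 * M + 1) (k + 1 + 1) : ℝ)
          = (Nat.choose (2 * M + 1) (k + 1) : ℝ) * ((2 * M : ℝ) - k) / (k + 1 + 1) := by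
        field_simp
        linarith [hz]
      rw [hx, hzz]
      field_simp
      push_cast
      ring

lemma fSeq3_eq (M : ℕ) :
    fSeq3 (M + 1)
      = (2 / 3) * (3 * (M : ℝ) + 4) * Sp (2 * M + 1) (M + 1)
        + (2 * (M : ℝ) + 3) * ((-1 : ℝ) ^ (M + 1) * (Nat.choose (2 * M + 1) (M + 1) : ℝ) / 2 ^ (M + 1))
        + (2 * (M : ℝ) + 3) * ((-1 : ℝ) ^ M * (Nat.choose (2 * M + 1) M : ℝ) / 2 ^ M) / 6 := by
  have h := closed_partial M M (by omega)
  rw [fSeq3]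
  push_cast at h ⊢
  exact h

lemma part1 (m : ℕ) (hm : 2 ≤ m) :
    fSeq3 (2 * m + 2) =
      ((7 + 6 * (m : ℝ)) / (16 * (1 + 6 * m))) * fSeq3 (2 * m) -
      ((2 + (m : ℝ)) * (5 + 2 * m) * (13 + 177 * m + 704 * m ^ 2 + 420 * m ^ 3) *
          (Nat.choose (7 + 4 * m) (2 + 2 * m) : ℝ) * 2 ^ (-(1 : ℤ) - 2 * m) /
        (48 * (1 + 4 * (m : ℝ)) * (3 + 4 * m) * (5 + 4 * m) * (7 + 4 * m) * (1 + 6 * m))) := by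
  obtain ⟨j, rfl⟩ := Nat.exists_eq_add_of_le hm
  rw [show 2 * (2 + j) + 2 = (2 * j + 5) + 1 by ring, show 2 * (2 + j) = (2 * j + 3) + 1 by ring,
    fSeq3_eq, fSeq3_eq]
  rw [show 2 * (2 * j + 5) + 1 = 4 * j + 11 by ring, show 2 * (2 * j + 3) + 1 = 4 * j + 7 by ring,
    show (2 * j + 5) + 1 = 2 * j + 6 by ring, show (2 * j + 3) + 1 = 2 * j + 4 by ring,
    show 7 + 4 * (2 + j) = 4 * j + 15 by ring, show 2 + (2 * j + 4) = 2 * j + 6 by ring]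
  have hzp : (2 : ℝ) ^ (-(1 : ℤ) - 2 * ((2 + j : ℕ) : ℤ)) = 1 / 2 ^ (2 * j + 5) := by
    rw [show (-(1 : ℤ) - 2 * ((2 + j : ℕ) : ℤ)) = -((2 * j + 5 : ℕ) : ℤ) by push_cast; ring,
      zpow_neg, zpow_natCast, one_div]
  rw [hzp]
  have a1 := Sp_step (4 * j + 9) (2 * j + 4)
  have a2 := Sp_step (4 * j + 7) (2 * j + 2)
  have a3 := Sp_succ (4 * j + 7) (2 * j + 3)
  have a4 := Sp_succ (4 * j + 7) (2 * j + 2)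
  norm_num at a1 a2 a3 a4
  rw [a1, a2, a3, a4]
  have e1 : (-1 : ℝ) ^ (2 * j + 6) = 1 := Even.neg_one_pow ⟨j + 3, by ring⟩
  have e2 : (-1 : ℝ) ^ (2 * j + 5) = -1 := Odd.neg_one_pow ⟨j + 2, by ring⟩
  have e3 : (-1 : ℝ) ^ (2 * j + 4) = 1 := Even.neg_one_pow ⟨j + 2, by ring⟩
  have e4 : (-1 : ℝ) ^ (2 * j + 3) = -1 := Odd.neg_one_pow ⟨j + 1, by ring⟩
  have e5 : (-1 : ℝ) ^ (2 * j + 2) = 1 := Even.neg_one_pow ⟨j + 1, by ring⟩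
  simp only [e1, e2, e3, e4, e5]
  have hsym1 : Nat.choose (4 * j + 7) (2 * j + 4) = Nat.choose (4 * j + 7) (2 * j + 3) := by
    rw [show 2 * j + 4 = (4 * j + 7) - (2 * j + 3) by omega]
    exact Nat.choose_symm (by omega)
  have hsym2 : Nat.choose (4 * j + 11) (2 * j + 6) = Nat.choose (4 * j + 11) (2 * j + 5) := by
    rw [show 2 * j + 6 = (4 * j + 11) - (2 * j + 5) by omega]
    exact Nat.choose_symm (by omega)
  rw [hsym1, hsym2]
  push_cast
  norm_num
  -- nonzero denominators
  have d1 : (2 * (j:ℝ) + 3) ≠ 0 := by positivity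
  have d2 : (2 * (j:ℝ) + 4) ≠ 0 := by positivity
  have d3 : (2 * (j:ℝ) + 5) ≠ 0 := by positivity
  have d4 : (2 * (j:ℝ) + 6) ≠ 0 := by positivity
  have d5 : (2 * (j:ℝ) + 7) ≠ 0 := by positivity
  have d6 : (2 * (j:ℝ) + 8) ≠ 0 := by positivity
  have d7 : (2 * (j:ℝ) + 9) ≠ 0 := by positivity
  -- ratio facts
  have r1 : (Nat.choose (4*j+7) (2*j+3) : ℝ) * (2*(j:ℝ)+3)
      = (Nat.choose (4*j+7) (2*j+2) : ℝ) * (2*(j:ℝ)+5) := by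
    have h := Nat.choose_succ_right_eq (4*j+7) (2*j+2)
    rw [show 4*j+7 - (2*j+2) = 2*j+5 by omega] at h
    have := congrArg (Nat.cast : ℕ → ℝ) h
    push_cast at this; linarith
  have r2 : (4*(j:ℝ)+8) * (Nat.choose (4*j+7) (2*j+3) : ℝ)
      = (Nat.choose (4*j+8) (2*j+4) : ℝ) * (2*(j:ℝ)+4) := by
    have h := Nat.add_one_mul_choose_eq (4*j+7) (2*j+3)
    have := congrArg (Nat.cast : ℕ → ℝ) h
    push_cast at this; linarith
  have r3 : (4*(j:ℝ)+9) * (Nat.choose (4*j+8) (2*j+4) : ℝ)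
      = (Nat.choose (4*j+9) (2*j+5) : ℝ) * (2*(j:ℝ)+5) := by
    have h := Nat.add_one_mul_choose_eq (4*j+8) (2*j+4)
    have := congrArg (Nat.cast : ℕ → ℝ) h
    push_cast at this; linarith
  have r4 : (Nat.choose (4*j+9) (2*j+5) : ℝ) * (4*(j:ℝ)+10)
      = (Nat.choose (4*j+10) (2*j+5) : ℝ) * (2*(j:ℝ)+5) := by
    have h := Nat.choose_mul_succ_eq (4*j+9) (2*j+5)
    rw [show 4*j+9+1 - (2*j+5) = 2*j+5 by omega] at h
    have := congrArg (Nat.cast : ℕ → ℝ) h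
    push_cast at this; linarith
  have r5 : (Nat.choose (4*j+10) (2*j+5) : ℝ) * (4*(j:ℝ)+11)
      = (Nat.choose (4*j+11) (2*j+5) : ℝ) * (2*(j:ℝ)+6) := by
    have h := Nat.choose_mul_succ_eq (4*j+10) (2*j+5)
    rw [show 4*j+10+1 - (2*j+5) = 2*j+6 by omega] at h
    have := congrArg (Nat.cast : ℕ → ℝ) h
    push_cast at this; linarith
  have r6 : (Nat.choose (4*j+11) (2*j+5) : ℝ) * (4*(j:ℝ)+12)
      = (Nat.choose (4*j+12) (2*j+6) : ℝ) * (2*(j:ℝ)+6) := by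
    have h := Nat.choose_mul_succ_eq (4*j+11) (2*j+6)
    rw [show 4*j+11+1 - (2*j+6) = 2*j+6 by omega, hsym2] at h
    have := congrArg (Nat.cast : ℕ → ℝ) h
    push_cast at this; linarith
  have r7 : (Nat.choose (4*j+12) (2*j+6) : ℝ) * (4*(j:ℝ)+13)
      = (Nat.choose (4*j+13) (2*j+6) : ℝ) * (2*(j:ℝ)+7) := by
    have h := Nat.choose_mul_succ_eq (4*j+12) (2*j+6)
    rw [show 4*j+12+1 - (2*j+6) = 2*j+7 by omega] at h
    have := congrArg (Nat.cast : ℕ → ℝ) h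
    push_cast at this; linarith
  have r8 : (Nat.choose (4*j+13) (2*j+6) : ℝ) * (4*(j:ℝ)+14)
      = (Nat.choose (4*j+14) (2*j+6) : ℝ) * (2*(j:ℝ)+8) := by
    have h := Nat.choose_mul_succ_eq (4*j+13) (2*j+6)
    rw [show 4*j+13+1 - (2*j+6) = 2*j+8 by omega] at h
    have := congrArg (Nat.cast : ℕ → ℝ) h
    push_cast at this; linarith
  have r9 : (Nat.choose (4*j+14) (2*j+6) : ℝ) * (4*(j:ℝ)+15)
      = (Nat.choose (4*j+15) (2*j+6) : ℝ) * (2*(j:ℝ)+9) := by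
    have h := Nat.choose_mul_succ_eq (4*j+14) (2*j+6)
    rw [show 4*j+14+1 - (2*j+6) = 2*j+9 by omega] at h
    have := congrArg (Nat.cast : ℕ → ℝ) h
    push_cast at this; linarith
  -- explicit division forms, substituted from the top of the chain down
  have x9 : (Nat.choose (4*j+15) (2*j+6) : ℝ)
      = (Nat.choose (4*j+14) (2*j+6) : ℝ) * (4*(j:ℝ)+15) / (2*(j:ℝ)+9) := by
    field_simp; linarith
  have x8 : (Nat.choose (4*j+14) (2*j+6) : ℝ)
      = (Nat.choose (4*j+13) (2*j+6) : ℝ) * (4*(j:ℝ)+14) / (2*(j:ℝ)+8) := by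
    field_simp; linarith
  have x7 : (Nat.choose (4*j+13) (2*j+6) : ℝ)
      = (Nat.choose (4*j+12) (2*j+6) : ℝ) * (4*(j:ℝ)+13) / (2*(j:ℝ)+7) := by
    field_simp; linarith
  have x6 : (Nat.choose (4*j+12) (2*j+6) : ℝ)
      = (Nat.choose (4*j+11) (2*j+5) : ℝ) * (4*(j:ℝ)+12) / (2*(j:ℝ)+6) := by
    field_simp; linarith
  have x5 : (Nat.choose (4*j+11) (2*j+5) : ℝ)
      = (Nat.choose (4*j+10) (2*j+5) : ℝ) * (4*(j:ℝ)+11) / (2*(j:ℝ)+6) := by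
    field_simp; linarith
  have x4 : (Nat.choose (4*j+10) (2*j+5) : ℝ)
      = (Nat.choose (4*j+9) (2*j+5) : ℝ) * (4*(j:ℝ)+10) / (2*(j:ℝ)+5) := by
    field_simp; linarith
  have x3 : (Nat.choose (4*j+9) (2*j+5) : ℝ)
      = (Nat.choose (4*j+8) (2*j+4) : ℝ) * (4*(j:ℝ)+9) / (2*(j:ℝ)+5) := by
    field_simp; linarith
  have x2 : (Nat.choose (4*j+8) (2*j+4) : ℝ)
      = (Nat.choose (4*j+7) (2*j+3) : ℝ) * (4*(j:ℝ)+8) / (2*(j:ℝ)+4) := by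
    field_simp; linarith
  have x1 : (Nat.choose (4*j+7) (2*j+2) : ℝ)
      = (Nat.choose (4*j+7) (2*j+3) : ℝ) * (2*(j:ℝ)+3) / (2*(j:ℝ)+5) := by
    field_simp; linarith
  rw [x9, x8, x7, x6, x5, x4, x3, x2, x1]
  field_simp
  ring

lemma fSeq3_four : fSeq3 4 = -23 / 24 := by
  rw [fSeq3, show (Icc 1 4 : Finset ℕ) = {1, 2, 3, 4} from rfl]
  rw [Finset.sum_insert (by decide), Finset.sum_insert (by decide),
    Finset.sum_insert (by decide), Finset.sum_singleton]
  norm_num [Nat.choose]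

/-- `f` satisfies `f(2m+2) = p_m f(2m) − q_m` with the stated `p_m, q_m`, and
consequently `f(2m) < 0` for all `m ≥ 2`. -/
theorem stmt_15 :
    (∀ m : ℕ, 2 ≤ m →
      fSeq3 (2 * m + 2) =
        ((7 + 6 * (m : ℝ)) / (16 * (1 + 6 * m))) * fSeq3 (2 * m) -
        ((2 + (m : ℝ)) * (5 + 2 * m) * (13 + 177 * m + 704 * m ^ 2 + 420 * m ^ 3) *
            (Nat.choose (7 + 4 * m) (2 + 2 * m) : ℝ) * 2 ^ (-(1 : ℤ) - 2 * m) /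
          (48 * (1 + 4 * (m : ℝ)) * (3 + 4 * m) * (5 + 4 * m) * (7 + 4 * m) * (1 + 6 * m)))) ∧
    (∀ m : ℕ, 2 ≤ m → fSeq3 (2 * m) < 0) := by
  refine ⟨fun m hm => part1 m hm, ?_⟩
  intro m hm
  induction m, hm using Nat.le_induction with
  | base =>
      norm_num [fSeq3_four]
  | succ m hm ih =>
      have h := part1 m hm
      rw [show 2 * (m + 1) = 2 * m + 2 by ring, h]
      have hp : 0 < (7 + 6 * (m : ℝ)) / (16 * (1 + 6 * (m : ℝ))) := by positivity
      have hc : (0 : ℝ) < (Nat.choose (7 + 4 * m) (2 + 2 * m) : ℝ) := by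
        exact_mod_cast Nat.choose_pos (by omega)
      have hq : 0 < (2 + (m : ℝ)) * (5 + 2 * m) * (13 + 177 * m + 704 * m ^ 2 + 420 * m ^ 3) *
            (Nat.choose (7 + 4 * m) (2 + 2 * m) : ℝ) * 2 ^ (-(1 : ℤ) - 2 * m) /
          (48 * (1 + 4 * (m : ℝ)) * (3 + 4 * m) * (5 + 4 * m) * (7 + 4 * m) * (1 + 6 * m)) := by
        apply div_pos
        · refine mul_pos (mul_pos (mul_pos (mul_pos (by positivity) (by positivity))
            (by positivity)) hc) (by positivity)
        · positivity
      have hneg : (7 + 6 * (m : ℝ)) / (16 * (1 + 6 * (m : ℝ))) * fSeq3 (2 * m) < 0 :=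
        mul_neg_of_pos_of_neg hp ih
      linarith
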